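/- Suppose V : ℝ → ℝ is differentiable, γ ≤ 0, and for every t, V(t) ≥ 1 implies V'(t) < γ V(t). If V(0) ≤ 1, then V(t) ≤ 1 for all t ≥ 0. -/
import Mathlib


/-- Lemma 1: quadratic γ-boundedness with γ ≤ 0 makes the sublevel set {V ≤ 1}
positively invariant. -/
theorem sublevel_invariance
    (V : ℝ → ℝ) (γ : ℝ)
    (hdiff : Differentiable ℝ V)
    (hγ : γ ≤ 0)
    (hdec : ∀ t : ℝ, 1 ≤ V t → deriv V t < γ * V t)
    (h0 : V 0 ≤ 1) :
    ∀ t : ℝ, 0 ≤ t → V t ≤ 1 := by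
  intro t ht
  by_contra hVt
  push_neg at hVt
  set S : Set ℝ := Set.Icc 0 t ∩ V ⁻¹' Set.Iic 1 with hS
  have hSne : S.Nonempty := ⟨0, ⟨le_refl 0, ht⟩, h0⟩
  have hSbdd : BddAbove S := ⟨t, fun x hx => hx.1.2⟩
  set s := sSup S with hs
  have hScl : IsClosed S :=
    (isClosed_Icc).inter (isClosed_Iic.preimage hdiff.continuous)
  have hsS : s ∈ S := hScl.csSup_mem hSne hSbdd
  have hs0 : 0 ≤ s := hsS.1.1
  have hst : s ≤ t := hsS.1.2
  have hVs : V s ≤ 1 := hsS.2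
  have hslt : s < t := by
    rcases lt_or_eq_of_le hst with h | h
    · exact h
    · rw [h] at hVs; linarith
  have hgt : ∀ u ∈ Set.Ioc s t, 1 < V u := by
    intro u hu
    by_contra h
    push_neg at h
    have : u ∈ S := ⟨⟨le_trans hs0 hu.1.le, hu.2⟩, h⟩
    exact absurd (le_csSup hSbdd this) (not_le.2 hu.1)
  have hanti : StrictAntiOn V (Set.Icc s t) := by
    apply strictAntiOn_of_deriv_neg (convex_Icc s t) hdiff.continuous.continuousOn
    intro u hu
    rw [interior_Icc] at hu
    have h1 : 1 ≤ V u := (hgt u ⟨hu.1, hu.2.le⟩).le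
    have := hdec u h1
    have h2 : γ * V u ≤ γ * 1 := mul_le_mul_of_nonpos_left h1 hγ
    linarith
  have := hanti (Set.left_mem_Icc.2 hst) (Set.right_mem_Icc.2 hst) hslt
  linarith
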